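/- For SL_4, w̲ = s_1 s_2 s_3 s_2 s_1 and its extension w̲_0 = s_1 s_2 s_3 s_2 s_1 s_2, the GHKK-type potential cone {x ∈ ℝ^8 : ^GHKK W^{trop}|_{X_s}(x) ≥ 0} is strictly contained in the restricted-superpotential cone Ξ_{w̲} = { x : res_{w̲}(W|_{X_{w̲_0}})^{trop}(x) ≥ 0 }; in particular the point x = (x_1,x_2,x_3,x_{12},x_{13},x_{14},x_{24},x_{34}) = (−1,−1,−1,−1,−1,−1,−1,1) lies in Ξ_{w̲} but not in the GHKK-type cone. -/

import Mathlib

/-- The restricted-superpotential cone `Ξ_{w̲}` for `SL₄`, `w̲ = s₁s₂s₃s₂s₁`, extension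
`w̲₀ = s₁s₂s₃s₂s₁s₂` (coordinates `(x₁, x₂, x₃, x₁₂, x₁₃, x₁₄, x₂₄, x₃₄)` of `ℝ⁸`). -/
def XiRes : Set (Fin 8 → ℝ) :=
  {x | 0 ≤ -x 2 ∧
       0 ≤ -x 1 ∧ 0 ≤ -x 1 - x 4 ∧ 0 ≤ -x 1 - x 4 - x 7 ∧
       0 ≤ -x 0 ∧ 0 ≤ -x 0 - x 3 ∧
       0 ≤ -x 6 ∧ 0 ≤ -x 6 - x 7 ∧
       0 ≤ -x 5 ∧ 0 ≤ -x 5 - x 4 ∧ 0 ≤ -x 5 - x 4 - x 7 ∧ 0 ≤ -x 5 - x 4 - x 7 - x 3}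

/-- The GHKK-type potential cone for the same seed. -/
def GHKKCone : Set (Fin 8 → ℝ) :=
  {x | 0 ≤ -x 2 ∧
       0 ≤ -x 1 ∧ 0 ≤ -x 1 - x 4 ∧
       0 ≤ -x 0 ∧ 0 ≤ -x 0 - x 3 ∧
       0 ≤ -x 6 ∧
       0 ≤ -x 7 ∧ 0 ≤ -x 7 - x 3 ∧
       0 ≤ -x 5 ∧ 0 ≤ -x 5 - x 4}

/-- **The GHKK-type cone is strictly contained in the restricted-superpotential cone.**
For `SL₄`, `w̲ = s₁s₂s₃s₂s₁` and its extension `w̲₀ = s₁s₂s₃s₂s₁s₂`, the cone cut out by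
the tropicalized GHKK-type potential is strictly contained in `Ξ_{w̲}`; in particular the
point `(x₁,…,x₃₄) = (−1,−1,−1,−1,−1,−1,−1,1)` lies in `Ξ_{w̲}` but not in the GHKK-type
cone. -/
theorem ghkk_ssubset_res :
    GHKKCone ⊂ XiRes ∧
    (![(-1 : ℝ), -1, -1, -1, -1, -1, -1, 1]) ∈ XiRes ∧
    (![(-1 : ℝ), -1, -1, -1, -1, -1, -1, 1]) ∉ GHKKCone := by
  have v5 : (![(-1 : ℝ), -1, -1, -1, -1, -1, -1, 1]) 5 = -1 := rfl
  have v6 : (![(-1 : ℝ), -1, -1, -1, -1, -1, -1, 1]) 6 = -1 := rfl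
  have v7 : (![(-1 : ℝ), -1, -1, -1, -1, -1, -1, 1]) 7 = 1 := rfl
  have hmem : (![(-1 : ℝ), -1, -1, -1, -1, -1, -1, 1]) ∈ XiRes := by
    simp only [XiRes, Set.mem_setOf_eq]
    have v2 : (![(-1 : ℝ), -1, -1, -1, -1, -1, -1, 1]) 2 = -1 := rfl
    have v3 : (![(-1 : ℝ), -1, -1, -1, -1, -1, -1, 1]) 3 = -1 := rfl
    have v4 : (![(-1 : ℝ), -1, -1, -1, -1, -1, -1, 1]) 4 = -1 := rfl
    norm_num [v2, v3, v4, v5, v6, v7]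
  have hnot : (![(-1 : ℝ), -1, -1, -1, -1, -1, -1, 1]) ∉ GHKKCone := by
    simp only [GHKKCone, Set.mem_setOf_eq]
    norm_num [v5, v6, v7]
  refine ⟨⟨fun x hx => ?_, fun h => hnot (h hmem)⟩, hmem, hnot⟩
  obtain ⟨h1, h2, h3, h4, h5, h6, h7, h8, h9, h10⟩ := hx
  exact ⟨h1, h2, h3, by linarith, h4, h5, h6, by linarith, h9, h10, by linarith, by linarith⟩
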